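/- Let a and n be real numbers with 0 < a < n, and let z be a real number with 0 < z ≤ 2·(n−a)/a. Then a·z ≤ n·log(1+z). -/

import Mathlib

lemma log_ge_aux (z : ℝ) (hz : 0 ≤ z) : 2*z/(2+z) ≤ Real.log (1+z) := by
  set g : ℝ → ℝ := fun t => Real.log (1+t) - 2*t/(2+t) with hg
  have hderiv : ∀ t ∈ interior (Set.Ici (0:ℝ)), HasDerivAt g (1/(1+t) - 4/(2+t)^2) t := by
    intro t ht
    simp only [interior_Ici, Set.mem_Ioi] at ht
    have h1 : (1:ℝ) + t > 0 := by linarith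
    have h2 : (2:ℝ) + t > 0 := by linarith
    have hd1 : HasDerivAt (fun t : ℝ => Real.log (1+t)) (1/(1+t)) t := by
      have := (Real.hasDerivAt_log h1.ne').comp t ((hasDerivAt_id t).const_add 1)
      simpa [one_div, Function.comp_def] using this
    have hd2 : HasDerivAt (fun t : ℝ => 2*t/(2+t)) (4/(2+t)^2) t := by
      have hnum : HasDerivAt (fun t : ℝ => 2*t) 2 t := by
        simpa using (hasDerivAt_id t).const_mul 2
      have hden : HasDerivAt (fun t : ℝ => 2+t) 1 t := (hasDerivAt_id t).const_add 2
      have : HasDerivAt (fun t : ℝ => 2*t/(2+t)) _ t := hnum.div hden h2.ne'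
      convert this using 1
      ring
    exact hd1.sub hd2
  have hmono : MonotoneOn g (Set.Ici (0:ℝ)) := by
    apply monotoneOn_of_deriv_nonneg (convex_Ici 0)
    · apply ContinuousOn.sub
      · apply ContinuousOn.log (by fun_prop)
        intro t ht
        have : (0:ℝ) ≤ t := ht
        positivity
      · apply ContinuousOn.div (by fun_prop) (by fun_prop)
        intro t ht
        have : (0:ℝ) ≤ t := ht
        positivity
    · intro t ht
      exact ((hderiv t ht).differentiableAt).differentiableWithinAt
    · intro t ht
      rw [(hderiv t ht).deriv]
      simp only [interior_Ici, Set.mem_Ioi] at ht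
      have h1 : (1:ℝ) + t > 0 := by linarith
      have h2 : (2:ℝ) + t > 0 := by linarith
      rw [div_sub_div _ _ h1.ne' (by positivity), le_div_iff₀ (by positivity)]
      nlinarith [sq_nonneg t]
  have h0 : g 0 = 0 := by simp [hg]
  have := hmono (Set.self_mem_Ici) hz hz
  rw [h0] at this
  simp only [hg] at this
  linarith

theorem stmt_11 (a n z : ℝ) (ha : 0 < a) (han : a < n) (hz : 0 < z)
    (hz2 : z ≤ 2 * (n - a) / a) : a * z ≤ n * Real.log (1 + z) := by
  have hlog := log_ge_aux z hz.le
  have h2z : (0:ℝ) < 2 + z := by linarith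
  have haz : a * z ≤ 2 * (n - a) := by
    rw [le_div_iff₀ ha] at hz2
    linarith
  have step : a * z ≤ n * (2 * z / (2 + z)) := by
    rw [mul_div_assoc', le_div_iff₀ h2z]
    nlinarith
  calc a * z ≤ n * (2 * z / (2 + z)) := step
    _ ≤ n * Real.log (1 + z) := by
        apply mul_le_mul_of_nonneg_left hlog (by linarith)
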